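/- Let α : X → 𝒫(Σ_τ × X ⊎ {✓}) be a non-deterministic automaton with silent moves, with x →^σ x' iff (σ,x') ∈ α(x). Define α^*(x) := {(σ,x') | σ ∈ Σ_τ, x ⟹^σ x'} ∪ {✓ | ∃ x', x (→^τ)^* x' and ✓ ∈ α(x')}. Then α^* is the least map β : X → 𝒫(Σ_τ × X ⊎ {✓}) (in the pointwise inclusion order) satisfying e_X ≤ β, α ≤ β and β·β ≤ β, where · is the Kleisli composition of the monad 𝒫(Σ_τ × Id + 1). -/
import Mathlib


-- Labels: `none` is the silent label τ, `some a` is a visible letter of Σ.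
-- A value `Sum.inr ()` plays the role of the termination symbol ✓.

/-- Kleisli composition for the monad `𝒫(Σ_τ × Id + 1)`. -/
def kcompN {A X Y Z : Type*} (g : Y → Set ((Option A × Z) ⊕ Unit))
    (f : X → Set ((Option A × Y) ⊕ Unit)) : X → Set ((Option A × Z) ⊕ Unit) :=
  fun x => {w |
    (∃ σ z, w = Sum.inl (σ, z) ∧ ∃ y,
        (Sum.inl (σ, y) ∈ f x ∧ Sum.inl ((none : Option A), z) ∈ g y) ∨
        (Sum.inl ((none : Option A), y) ∈ f x ∧ Sum.inl (σ, z) ∈ g y)) ∨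
    (w = Sum.inr () ∧ (Sum.inr () ∈ f x ∨
        ∃ y, Sum.inl ((none : Option A), y) ∈ f x ∧ Sum.inr () ∈ g y))}

/-- The unit of the monad `𝒫(Σ_τ × Id + 1)`: `e_X(x) = {(τ,x)}`. -/
def kunitN {A : Type*} (X : Type*) : X → Set ((Option A × X) ⊕ Unit) :=
  fun x => {Sum.inl ((none : Option A), x)}

/-- The pointwise inclusion order on Kleisli maps. -/
def leN {A X Y : Type*} (f g : X → Set ((Option A × Y) ⊕ Unit)) : Prop := ∀ x, f x ⊆ g x

/-- The τ-reachability relation `(→^τ)^*` of the automaton `α`. -/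
def tauStar {X A : Type*} (α : X → Set ((Option A × X) ⊕ Unit)) : X → X → Prop :=
  Relation.ReflTransGen (fun x y => Sum.inl ((none : Option A), y) ∈ α x)

/-- Saturated transition `⟹^σ` of the automaton `α`. -/
def WTrN {X A : Type*} (α : X → Set ((Option A × X) ⊕ Unit)) : Option A → X → X → Prop
  | none => tauStar α
  | some a => fun x y => ∃ u v, tauStar α x u ∧ Sum.inl (some a, v) ∈ α u ∧ tauStar α v y

/-- The saturation `α*` of a non-deterministic automaton with silent moves:
`α*(x) = {(σ,x') | x ⟹^σ x'} ∪ {✓ | ∃ x', x (→^τ)^* x' ∧ ✓ ∈ α(x')}`. -/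
def satN {X A : Type*} (α : X → Set ((Option A × X) ⊕ Unit)) :
    X → Set ((Option A × X) ⊕ Unit) :=
  fun x => {w | (∃ σ x', w = Sum.inl (σ, x') ∧ WTrN α σ x x') ∨
                (w = Sum.inr () ∧ ∃ x', tauStar α x x' ∧ Sum.inr () ∈ α x')}


lemma kcomp_mem {A X : Type*} {f g : X → Set ((Option A × X) ⊕ Unit)} {x y : X}
    {w : (Option A × X) ⊕ Unit} (h1 : Sum.inl ((none : Option A), y) ∈ f x)
    (h2 : w ∈ g y) : w ∈ kcompN g f x := by
  rcases w with ⟨σ, z⟩ | u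
  · exact Or.inl ⟨σ, z, rfl, y, Or.inr ⟨h1, h2⟩⟩
  · exact Or.inr ⟨rfl, Or.inr ⟨y, h1, h2⟩⟩

lemma kcomp_mem' {A X : Type*} {f g : X → Set ((Option A × X) ⊕ Unit)} {x y z : X}
    {σ : Option A} (h1 : Sum.inl (σ, y) ∈ f x)
    (h2 : Sum.inl ((none : Option A), z) ∈ g y) : Sum.inl (σ, z) ∈ kcompN g f x :=
  Or.inl ⟨σ, z, rfl, y, Or.inl ⟨h1, h2⟩⟩

lemma wtr_tau_left {X A : Type*} {α : X → Set ((Option A × X) ⊕ Unit)} {σ : Option A}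
    {x y z : X} (h1 : tauStar α x y) (h2 : WTrN α σ y z) : WTrN α σ x z := by
  cases σ with
  | none => exact h1.trans h2
  | some a => obtain ⟨u, v, hu, hv, hy⟩ := h2; exact ⟨u, v, h1.trans hu, hv, hy⟩

lemma wtr_tau_right {X A : Type*} {α : X → Set ((Option A × X) ⊕ Unit)} {σ : Option A}
    {x y z : X} (h1 : WTrN α σ x y) (h2 : tauStar α y z) : WTrN α σ x z := by
  cases σ with
  | none => exact h1.trans h2
  | some a => obtain ⟨u, v, hu, hv, hy⟩ := h1; exact ⟨u, v, hu, hv, hy.trans h2⟩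

lemma tau_mem_beta {X A : Type*} {α β : X → Set ((Option A × X) ⊕ Unit)}
    (hu : leN (kunitN X) β) (hα : leN α β) (hc : leN (kcompN β β) β)
    {x y : X} (h : tauStar α x y) : Sum.inl ((none : Option A), y) ∈ β x := by
  induction h using Relation.ReflTransGen.head_induction_on with
  | refl => exact hu _ rfl
  | head hstep _ ih => exact hc _ (kcomp_mem (hα _ hstep) ih)

/-- `α*` is the least map `β` (pointwise) with `e ≤ β`, `α ≤ β` and `β·β ≤ β`. -/
theorem nda_saturation_least {X A : Type*} (α : X → Set ((Option A × X) ⊕ Unit)) :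
    leN (kunitN X) (satN α) ∧
    leN α (satN α) ∧
    leN (kcompN (satN α) (satN α)) (satN α) ∧
    (∀ β : X → Set ((Option A × X) ⊕ Unit),
      leN (kunitN X) β → leN α β → leN (kcompN β β) β → leN (satN α) β) := by
  refine ⟨?_, ?_, ?_, ?_⟩
  · intro x w hw
    rw [kunitN] at hw; cases hw
    exact Or.inl ⟨none, x, rfl, Relation.ReflTransGen.refl⟩
  · intro x w hw
    rcases w with ⟨σ, x'⟩ | u
    · refine Or.inl ⟨σ, x', rfl, ?_⟩
      cases σ with
      | none => exact Relation.ReflTransGen.single hw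
      | some a => exact ⟨x, x', Relation.ReflTransGen.refl, hw, Relation.ReflTransGen.refl⟩
    · cases u; exact Or.inr ⟨rfl, x, Relation.ReflTransGen.refl, hw⟩
  · intro x w hw
    rcases hw with ⟨σ, z, rfl, y, ⟨h1, h2⟩ | ⟨h1, h2⟩⟩ | ⟨rfl, h | ⟨y, h1, h2⟩⟩
    · rcases h1 with ⟨σ', x', he, hw1⟩ | ⟨he, _⟩
      · simp only [Sum.inl.injEq, Prod.mk.injEq] at he; obtain ⟨rfl, rfl⟩ := he
        rcases h2 with ⟨σ'', x'', he2, hw2⟩ | ⟨he2, _⟩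
        · simp only [Sum.inl.injEq, Prod.mk.injEq] at he2; obtain ⟨rfl, rfl⟩ := he2
          exact Or.inl ⟨σ, z, rfl, wtr_tau_right hw1 hw2⟩
        · exact absurd he2 (by simp)
      · exact absurd he (by simp)
    · rcases h1 with ⟨σ', x', he, hw1⟩ | ⟨he, _⟩
      · simp only [Sum.inl.injEq, Prod.mk.injEq] at he; obtain ⟨rfl, rfl⟩ := he
        rcases h2 with ⟨σ'', x'', he2, hw2⟩ | ⟨he2, _⟩
        · simp only [Sum.inl.injEq, Prod.mk.injEq] at he2; obtain ⟨rfl, rfl⟩ := he2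
          exact Or.inl ⟨σ, z, rfl, wtr_tau_left hw1 hw2⟩
        · exact absurd he2 (by simp)
      · exact absurd he (by simp)
    · exact h
    · rcases h1 with ⟨σ', x', he, hw1⟩ | ⟨he, _⟩
      · simp only [Sum.inl.injEq, Prod.mk.injEq] at he; obtain ⟨rfl, rfl⟩ := he
        rcases h2 with ⟨_, _, he2, _⟩ | ⟨_, x'', hx1, hx2⟩
        · exact absurd he2 (by simp)
        · exact Or.inr ⟨rfl, x'', hw1.trans hx1, hx2⟩
      · exact absurd he (by simp)
  · intro β hu hα hc x w hw
    rcases hw with ⟨σ, x', rfl, hw⟩ | ⟨rfl, x', ht, hv⟩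
    · cases σ with
      | none => exact tau_mem_beta hu hα hc hw
      | some a =>
        obtain ⟨u, v, h1, h2, h3⟩ := hw
        exact hc _ (kcomp_mem' (hc _ (kcomp_mem (tau_mem_beta hu hα hc h1) (hα _ h2)))
          (tau_mem_beta hu hα hc h3))
    · exact hc _ (kcomp_mem (tau_mem_beta hu hα hc ht) (hα _ hv))
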